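/- Let (T_-, T_+) be a reduced tree pair diagram, each tree having m+1 carets, representing w in Thompson's group F, and let α be one of the generators x_0^{±1}, x_1^{±1}. Suppose: if α = x_0 the left subtree of the root of T_- is nonempty; if α = x_0^{-1} the right subtree of the root of T_- is nonempty; if α = x_1 the left subtree of the right child of the root of T_- is nonempty; if α = x_1^{-1} the right subtree of the right child of the root of T_- is nonempty. If the reduced tree pair diagram for wα also has m+1 carets, then there is exactly one index i with 0 ≤ i ≤ m such that the pair of caret types of caret number i changes when passing from the pair for w to the pair for wα. -/

import Mathlib

/-!
Combinatorial properties of Thompson's group F (Cleary–Taback).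

Common definitions: finite rooted binary trees, leaf exponents, reduced tree
pair diagrams, Fordham's caret types and weights, Thompson's group `F` as the
presented group on `x₀, x₁`, the infinite family of generators `x n`, word
length with respect to `{x₀, x₁}`, and the element of `F` represented by a
tree pair diagram.
-/

noncomputable section

namespace Thompson

/-- Finite rooted binary trees; a `node` is a caret. -/
inductive BinTree : Type
  | leaf : BinTree
  | node : BinTree → BinTree → BinTree
  deriving DecidableEq

namespace BinTree

/-- Number of carets (internal nodes). -/
def numCarets : BinTree → ℕ
  | .leaf => 0
  | .node l r => numCarets l + numCarets r + 1

/-- Number of exposed leaves. -/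
def numLeaves : BinTree → ℕ
  | .leaf => 1
  | .node l r => numLeaves l + numLeaves r

/-- The left subtree of the root (a leaf if the tree is a leaf). -/
def leftSubtree : BinTree → BinTree
  | .leaf => .leaf
  | .node l _ => l

/-- The right subtree of the root (a leaf if the tree is a leaf). -/
def rightSubtree : BinTree → BinTree
  | .leaf => .leaf
  | .node _ r => r

/-- Helper for `exps`: leaf exponents of a subtree hanging by a left edge,
where maximal left-edge paths may also use the edge from this subtree's root
to its parent. -/
def expsAux : BinTree → List ℕ
  | .leaf => [0]
  | .node l r =>
      (match expsAux l with
        | [] => []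
        | a :: as => (a + 1) :: as) ++ expsAux r

/-- The list of leaf exponents `E(0), …, E(m)`: `E(k)` is the length of the
maximal path of left edges from leaf `k` that does not reach the right side
of the tree. -/
def exps : BinTree → List ℕ
  | .leaf => [0]
  | .node l r => expsAux l ++ exps r

/-- The indices `m` such that the exposed leaves numbered `m` and `m+1` are
the two leaves of a single caret. -/
def exposedCaretPairs : BinTree → List ℕ
  | .leaf => []
  | .node .leaf .leaf => [0]
  | .node l r => exposedCaretPairs l ++ (exposedCaretPairs r).map (· + numLeaves l)

/-- The smallest leaf number occurring in the right subtree of the root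
(leaves are numbered from `0` left to right, so this is the number of leaves
of the left subtree of the root). -/
def minRightLeaf (T : BinTree) : ℕ := T.leftSubtree.numLeaves

/-- A tree all of whose non-root carets are right carets. -/
def IsRightVine : BinTree → Prop
  | .leaf => True
  | .node l r => l = .leaf ∧ IsRightVine r

end BinTree

open BinTree

/-- `(T₋, T₊)` is a reduced tree pair diagram: the two trees have the same
number of carets and there is no index `m` such that in both trees the
exposed leaves numbered `m` and `m+1` are the two leaves of a single caret. -/
def IsReducedPair (Tm Tp : BinTree) : Prop :=
  Tm.numCarets = Tp.numCarets ∧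
    ∀ m : ℕ, ¬(m ∈ exposedCaretPairs Tm ∧ m ∈ exposedCaretPairs Tp)

/-- Position of a caret: on the left side of the tree (the root counts as a
left caret), on the right side, or interior. -/
inductive CaretPos : Type
  | left | right | interior
  deriving DecidableEq

/-- Infix-ordered list of `(position, has right child)` for the carets of a
subtree all of whose carets are interior. -/
def interiorInfo : BinTree → List (CaretPos × Bool)
  | .leaf => []
  | .node l r =>
      interiorInfo l ++ (CaretPos.interior, decide (r ≠ BinTree.leaf)) :: interiorInfo r

/-- Infix information for a subtree hanging on the left side of the tree. -/
def leftInfo : BinTree → List (CaretPos × Bool)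
  | .leaf => []
  | .node l r =>
      leftInfo l ++ (CaretPos.left, decide (r ≠ BinTree.leaf)) :: interiorInfo r

/-- Infix information for a subtree hanging on the right side of the tree. -/
def rightInfo : BinTree → List (CaretPos × Bool)
  | .leaf => []
  | .node l r =>
      interiorInfo l ++ (CaretPos.right, decide (r ≠ BinTree.leaf)) :: rightInfo r

/-- Infix-ordered list of `(position, has right child)` over all carets of a
tree; the root counts as a left caret. -/
def infoList : BinTree → List (CaretPos × Bool)
  | .leaf => []
  | .node l r =>
      leftInfo l ++ (CaretPos.left, decide (r ≠ BinTree.leaf)) :: rightInfo r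

/-- The number of left carets of a tree (the root counts as a left caret). -/
def numLeftCarets (T : BinTree) : ℕ := ((infoList T).map Prod.fst).count CaretPos.left

/-- The number of interior carets of a tree. -/
def numInteriorCarets (T : BinTree) : ℕ :=
  ((infoList T).map Prod.fst).count CaretPos.interior

/-- The number of right carets of a tree. -/
def numRightCarets (T : BinTree) : ℕ := ((infoList T).map Prod.fst).count CaretPos.right

/-- Fordham's seven caret types. -/
inductive CaretType : Type
  | L0 | LL | I0 | IR | RI | RNI | R0
  deriving DecidableEq

/-- The type of the caret numbered `i` (infix order), given the infix
information list of the tree. -/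
def typeOf (l : List (CaretPos × Bool)) (i : ℕ) : CaretType :=
  if i = 0 then CaretType.L0
  else
    match l[i]? with
    | some (CaretPos.left, _) => CaretType.LL
    | some (CaretPos.interior, b) => if b then CaretType.IR else CaretType.I0
    | some (CaretPos.right, _) =>
        match l[i + 1]? with
        | some (CaretPos.interior, _) => CaretType.RI
        | _ =>
            if (l.drop (i + 1)).any (fun p => p.1 == CaretPos.interior) then CaretType.RNI
            else CaretType.R0
    | none => CaretType.R0

/-- The type of the caret numbered `i` (infix order) in the tree `T`. -/
def caretTypeAt (T : BinTree) (i : ℕ) : CaretType := typeOf (infoList T) i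

/-- The infix-ordered list of caret types of a tree. -/
def caretTypes (T : BinTree) : List CaretType :=
  (List.range T.numCarets).map (caretTypeAt T)

/-- Fordham's weight of a pair of caret types: the pair `(L₀, L₀)` has weight
`0`, and all other weights are given by Fordham's table. -/
def weight : CaretType → CaretType → ℕ
  | .L0, _ => 0
  | _, .L0 => 0
  | .R0, .R0 => 0 | .R0, .RNI => 2 | .R0, .RI => 2 | .R0, .LL => 1 | .R0, .I0 => 1
  | .R0, .IR => 3
  | .RNI, .R0 => 2 | .RNI, .RNI => 2 | .RNI, .RI => 2 | .RNI, .LL => 1 | .RNI, .I0 => 1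
  | .RNI, .IR => 3
  | .RI, .R0 => 2 | .RI, .RNI => 2 | .RI, .RI => 2 | .RI, .LL => 1 | .RI, .I0 => 3
  | .RI, .IR => 3
  | .LL, .R0 => 1 | .LL, .RNI => 1 | .LL, .RI => 1 | .LL, .LL => 2 | .LL, .I0 => 2
  | .LL, .IR => 2
  | .I0, .R0 => 1 | .I0, .RNI => 1 | .I0, .RI => 3 | .I0, .LL => 2 | .I0, .I0 => 2
  | .I0, .IR => 4
  | .IR, .R0 => 3 | .IR, .RNI => 3 | .IR, .RI => 3 | .IR, .LL => 2 | .IR, .I0 => 4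
  | .IR, .IR => 4

open scoped commutatorElement

/-- The defining relators of Thompson's group `F` in the finite presentation
`⟨x₀, x₁ ∣ [x₀x₁⁻¹, x₀⁻¹x₁x₀], [x₀x₁⁻¹, x₀⁻²x₁x₀²]⟩`. -/
def thompsonRels : Set (FreeGroup (Fin 2)) :=
  {⁅FreeGroup.of (0 : Fin 2) * (FreeGroup.of (1 : Fin 2))⁻¹,
      (FreeGroup.of (0 : Fin 2))⁻¹ * FreeGroup.of (1 : Fin 2) * FreeGroup.of (0 : Fin 2)⁆,
    ⁅FreeGroup.of (0 : Fin 2) * (FreeGroup.of (1 : Fin 2))⁻¹,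
      (FreeGroup.of (0 : Fin 2))⁻¹ * (FreeGroup.of (0 : Fin 2))⁻¹ * FreeGroup.of (1 : Fin 2) * FreeGroup.of (0 : Fin 2) *
        FreeGroup.of (0 : Fin 2)⁆}

/-- Thompson's group `F`. -/
abbrev F : Type := PresentedGroup thompsonRels

/-- The generator `x₀` of `F`. -/
def x0 : F := PresentedGroup.of (0 : Fin 2)

/-- The generator `x₁` of `F`. -/
def x1 : F := PresentedGroup.of (1 : Fin 2)

/-- The generators `x_n` of the infinite presentation:
`x_n = x₀^{-(n-1)} x₁ x₀^{n-1}` for `n ≥ 1`. -/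
def x : ℕ → F
  | 0 => x0
  | n + 1 => (x0 ^ n)⁻¹ * x1 * x0 ^ n

/-- The symmetrized generating set `{x₀^{±1}, x₁^{±1}}` of `F`. -/
def genSet : Set F := {x0, x0⁻¹, x1, x1⁻¹}

/-- The word length of `w ∈ F` with respect to the generating set `{x₀, x₁}`:
the least `n` such that `w` is a product of `n` elements of
`{x₀^{±1}, x₁^{±1}}`. -/
def wordLength (w : F) : ℕ :=
  sInf {n | ∃ l : List F, l.length = n ∧ (∀ g ∈ l, g ∈ genSet) ∧ l.prod = w}

/-- The positive element `x₀^{E(0)} x₁^{E(1)} ⋯ x_m^{E(m)}` of `F` built from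
the leaf exponents of a tree. -/
def posElt (T : BinTree) : F := ((T.exps).zipIdx.map fun p => x p.2 ^ p.1).prod

/-- The element of `F` represented by the tree pair diagram `(T₋, T₊)`:
the positive part comes from the leaf exponents of `T₊` and the negative part
from those of `T₋`. -/
def toF (Tm Tp : BinTree) : F := posElt Tp * (posElt Tm)⁻¹

/-- `x_{i₁}^{r₁} ⋯ x_{i_k}^{r_k}` for a list of indices and exponents. -/
def prodX (idx exps : List ℕ) : F := (List.zipWith (fun i r => x i ^ r) idx exps).prod

/-- The element `x₀^{r₀} x_{i₁}^{r₁} ⋯ x_{i_k}^{r_k} x_{j_l}^{-s_l} ⋯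
x_{j₁}^{-s₁} x₀^{-s₀}` of `F` (normal form with the `x₀`-exponents
separated). -/
def nfElt0 (r0 : ℕ) (is rs js ss : List ℕ) (s0 : ℕ) : F :=
  x0 ^ r0 * prodX is rs * (x0 ^ s0 * prodX js ss)⁻¹

/-- Normal form data `x_{i₁}^{r₁} ⋯ x_{i_k}^{r_k} x_{j_l}^{-s_l} ⋯ x_{j₁}^{-s₁}`:
positive exponents, strictly increasing indices, and the uniqueness condition
that whenever both `x_i` and `x_i⁻¹` occur so does `x_{i+1}` or `x_{i+1}⁻¹`. -/
def IsNF (is rs js ss : List ℕ) : Prop :=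
  is.length = rs.length ∧ js.length = ss.length ∧
    is.Chain' (· < ·) ∧ js.Chain' (· < ·) ∧
    (∀ r ∈ rs, 0 < r) ∧ (∀ s ∈ ss, 0 < s) ∧
    (∀ i : ℕ, i ∈ is → i ∈ js → (i + 1 ∈ is ∨ i + 1 ∈ js))

/-- Normal form data with the `x₀`-exponents separated (without the
uniqueness condition): positive exponents and strictly increasing positive
indices. -/
def IsWeakNF0 (_r0 : ℕ) (is rs js ss : List ℕ) (_s0 : ℕ) : Prop :=
  is.length = rs.length ∧ js.length = ss.length ∧
    is.Chain' (· < ·) ∧ js.Chain' (· < ·) ∧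
    (∀ i ∈ is, 0 < i) ∧ (∀ j ∈ js, 0 < j) ∧
    (∀ r ∈ rs, 0 < r) ∧ (∀ s ∈ ss, 0 < s)

/-- Unique normal form data with the `x₀`-exponents separated: additionally,
whenever both `x_i` and `x_i⁻¹` occur, so does `x_{i+1}` or `x_{i+1}⁻¹`. -/
def IsNF0 (r0 : ℕ) (is rs js ss : List ℕ) (s0 : ℕ) : Prop :=
  IsWeakNF0 r0 is rs js ss s0 ∧
    (0 < r0 → 0 < s0 → (1 ∈ is ∨ 1 ∈ js)) ∧
    (∀ i : ℕ, i ∈ is → i ∈ js → (i + 1 ∈ is ∨ i + 1 ∈ js))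

/-- `w` is strictly positive: its normal form consists entirely of generators
with positive exponents. -/
def IsStrictlyPositive (w : F) : Prop :=
  ∃ is rs : List ℕ, is.length = rs.length ∧ is.Chain' (· < ·) ∧
    (∀ r ∈ rs, 0 < r) ∧ w = prodX is rs

/-- `w` is a dead end element: every generator decreases its word length. -/
def IsDeadEnd (w : F) : Prop :=
  ∀ α ∈ genSet, wordLength (w * α) + 1 = wordLength w

/-- The leaf-exponent function determined by the negative part
`x_{j_l}^{-s_l} ⋯ x_{j₁}^{-s₁} x₀^{-s₀}` of a normal form. -/
def nfExp (s0 : ℕ) (js ss : List ℕ) (k : ℕ) : ℕ :=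
  if k = 0 then s0 else (((js.zip ss).filter fun p => p.1 == k).map Prod.snd).sum

/-- The tree `T` realizes the leaf-exponent function `e`: its leaf exponents
agree with `e`, and `e` vanishes beyond the leaves of `T`. -/
def RealizesExps (T : BinTree) (e : ℕ → ℕ) : Prop :=
  ∀ k : ℕ, ((BinTree.exps T)[k]?).getD 0 = e k

/-- The weights, per caret type, of the nested traversal method. -/
def omegaWeight : CaretType → ℕ
  | .L0 => 0 | .R0 => 0 | .LL => 1 | .I0 => 1 | .RNI => 2 | .RI => 2 | .IR => 3



/-! ### Auxiliary material for Statement 1 -/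

section Statement1Aux

open BinTree

/-- Relation between info entries: same caret position, and equal booleans
when the position is interior (booleans of left entries are irrelevant for
caret types). -/
def InfoRel (p q : CaretPos × Bool) : Prop :=
  p.1 = q.1 ∧ (p.1 = CaretPos.interior → p.2 = q.2)

lemma infoRel_refl : ∀ L : List (CaretPos × Bool), List.Forall₂ InfoRel L L := by
  intro L
  induction L with
  | nil => exact .nil
  | cons a l ih => exact .cons ⟨rfl, fun _ => rfl⟩ ih

lemma forall₂_append {α : Type*} {R : α → α → Prop} {l1 l2 u1 u2 : List α}
    (h : List.Forall₂ R l1 l2) (h2 : List.Forall₂ R u1 u2) :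
    List.Forall₂ R (l1 ++ u1) (l2 ++ u2) := by
  induction h with
  | nil => exact h2
  | cons hr _ ih => exact List.Forall₂.cons hr ih

lemma forall₂_getElem? {α : Type*} {R : α → α → Prop} {l1 l2 : List α}
    (h : List.Forall₂ R l1 l2) (i : ℕ) :
    (l1[i]? = none ∧ l2[i]? = none) ∨
      ∃ a b, l1[i]? = some a ∧ l2[i]? = some b ∧ R a b := by
  induction h generalizing i with
  | nil => left; simp
  | cons hr hf ih =>
    cases i with
    | zero => right; exact ⟨_, _, by simp, by simp, hr⟩
    | succ n => simpa using ih n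

lemma mem_of_getElem?' {α : Type*} {l : List α} {i : ℕ} {a : α}
    (h : l[i]? = some a) : a ∈ l := by
  obtain ⟨hlt, rfl⟩ := List.getElem?_eq_some_iff.mp h
  exact List.getElem_mem _

lemma mem_interiorInfo {t : BinTree} {p : CaretPos × Bool}
    (h : p ∈ interiorInfo t) : p.1 = CaretPos.interior := by
  induction t with
  | leaf => simp [interiorInfo] at h
  | node l r ihl ihr =>
    simp only [interiorInfo, List.mem_append, List.mem_cons] at h
    rcases h with h | h | h
    · exact ihl h
    · rw [h]
    · exact ihr h

lemma mem_leftInfo {t : BinTree} {p : CaretPos × Bool}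
    (h : p ∈ leftInfo t) : p.1 = CaretPos.left ∨ p.1 = CaretPos.interior := by
  induction t with
  | leaf => simp [leftInfo] at h
  | node l r ihl ihr =>
    simp only [leftInfo, List.mem_append, List.mem_cons] at h
    rcases h with h | h | h
    · exact ihl h
    · left; rw [h]
    · exact Or.inr (mem_interiorInfo h)

lemma P_no_right (X Y : BinTree) (d : Bool) :
    ∀ x ∈ leftInfo X ++ (CaretPos.left, d) :: interiorInfo Y,
      x.1 ≠ CaretPos.right := by
  intro x hx
  rcases List.mem_append.mp hx with h | h
  · rcases mem_leftInfo h with h' | h' <;> simp [h']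
  · rcases List.mem_cons.mp h with rfl | h'
    · simp
    · simp [mem_interiorInfo h']

lemma interiorInfo_length (t : BinTree) : (interiorInfo t).length = t.numCarets := by
  induction t with
  | leaf => rfl
  | node l r ihl ihr => simp [interiorInfo, numCarets, ihl, ihr]; omega

lemma leftInfo_length (t : BinTree) : (leftInfo t).length = t.numCarets := by
  induction t with
  | leaf => rfl
  | node l r ihl ihr => simp [leftInfo, numCarets, ihl, interiorInfo_length]; omega

lemma rightInfo_length (t : BinTree) : (rightInfo t).length = t.numCarets := by
  induction t with
  | leaf => rfl
  | node l r ihl ihr => simp [rightInfo, numCarets, ihr, interiorInfo_length]; omega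

lemma infoList_length (t : BinTree) : (infoList t).length = t.numCarets := by
  cases t with
  | leaf => rfl
  | node l r => simp [infoList, numCarets, leftInfo_length, rightInfo_length]; omega

lemma typeOf_zero (l : List (CaretPos × Bool)) : typeOf l 0 = CaretType.L0 := by
  simp [typeOf]

lemma typeOf_congr {l l' : List (CaretPos × Bool)} {i : ℕ} (h0 : i ≠ 0)
    (h1 : l[i]? = l'[i]?) (h2 : l[i+1]? = l'[i+1]?)
    (h3 : l.drop (i+1) = l'.drop (i+1)) : typeOf l i = typeOf l' i := by
  unfold typeOf
  rw [if_neg h0, if_neg h0, h1, h2, h3]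

lemma typeOf_left {l : List (CaretPos × Bool)} {i : ℕ} {b : Bool} (h0 : i ≠ 0)
    (h : l[i]? = some (CaretPos.left, b)) : typeOf l i = CaretType.LL := by
  unfold typeOf
  rw [if_neg h0, h]

lemma typeOf_interior {l : List (CaretPos × Bool)} {i : ℕ} {b : Bool} (h0 : i ≠ 0)
    (h : l[i]? = some (CaretPos.interior, b)) :
    typeOf l i = if b then CaretType.IR else CaretType.I0 := by
  unfold typeOf
  rw [if_neg h0, h]

lemma typeOf_right_cases {l : List (CaretPos × Bool)} {i : ℕ} {b : Bool} (h0 : i ≠ 0)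
    (h : l[i]? = some (CaretPos.right, b)) :
    typeOf l i = CaretType.RI ∨ typeOf l i = CaretType.RNI ∨ typeOf l i = CaretType.R0 := by
  rcases h2 : l[i+1]? with _ | ⟨c2, b2⟩
  · unfold typeOf
    rw [if_neg h0, h, h2]
    first
      | (split_ifs <;> simp)
      | simp
  · unfold typeOf
    rw [if_neg h0, h, h2]
    cases c2 <;>
      first
        | (split_ifs <;> simp)
        | simp

lemma typeOf_nonright_cases {l : List (CaretPos × Bool)} {i : ℕ} {c : CaretPos} {b : Bool}
    (h0 : i ≠ 0) (h : l[i]? = some (c, b)) (hc : c ≠ CaretPos.right) :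
    typeOf l i = CaretType.LL ∨ typeOf l i = CaretType.I0 ∨ typeOf l i = CaretType.IR := by
  cases c with
  | left => exact Or.inl (typeOf_left h0 h)
  | right => exact absurd rfl hc
  | interior =>
    rw [typeOf_interior h0 h]
    cases b <;> simp

lemma getElem?_append_cons_self {α : Type*} (P S : List α) (p : α) :
    (P ++ p :: S)[P.length]? = some p := by
  rw [List.getElem?_append_right (le_refl _)]
  simp

lemma getElem?_append_cons_succ {α : Type*} (P S : List α) (p : α) (n : ℕ) :
    (P ++ p :: S)[P.length + 1 + n]? = S[n]? := by
  rw [List.getElem?_append_right (by omega)]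
  have h : P.length + 1 + n - P.length = n + 1 := by omega
  rw [h, List.getElem?_cons_succ]

lemma drop_append_cons {α : Type*} (P S : List α) (p : α) (n : ℕ) :
    (P ++ p :: S).drop (P.length + 1 + n) = S.drop n := by
  have h : P.length + 1 + n = P.length + (n + 1) := by omega
  rw [h, List.drop_length_add_append, List.drop_succ_cons]

lemma typeOf_eq_of_ne_idx {P Q S : List (CaretPos × Bool)} {p q : CaretPos × Bool}
    (hPQ : List.Forall₂ InfoRel P Q)
    (hPnr : ∀ x ∈ P, x.1 ≠ CaretPos.right)
    {i : ℕ} (hi : i ≠ P.length) :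
    typeOf (P ++ p :: S) i = typeOf (Q ++ q :: S) i := by
  have hlen : P.length = Q.length := hPQ.length_eq
  rcases Nat.lt_or_ge i P.length with hlt | hge
  · rcases forall₂_getElem? hPQ i with ⟨h1, _⟩ | ⟨a, b, h1, h2, hr⟩
    · exfalso
      rw [List.getElem?_eq_none_iff] at h1
      omega
    · have e1 : (P ++ p :: S)[i]? = some a := by
        rw [List.getElem?_append_left hlt, h1]
      have e2 : (Q ++ q :: S)[i]? = some b := by
        rw [List.getElem?_append_left (hlen ▸ hlt), h2]
      rcases Nat.eq_zero_or_pos i with rfl | hi0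
      · rw [typeOf_zero, typeOf_zero]
      · have hi0' : i ≠ 0 := by omega
        obtain ⟨a1, a2⟩ := a
        obtain ⟨b1, b2⟩ := b
        obtain ⟨hr1, hr2⟩ := hr
        simp only at hr1
        subst hr1
        have ha : a1 ≠ CaretPos.right := hPnr _ (mem_of_getElem?' h1)
        cases a1 with
        | left => rw [typeOf_left hi0' e1, typeOf_left hi0' e2]
        | right => exact absurd rfl ha
        | interior =>
          have hb : a2 = b2 := hr2 rfl
          subst hb
          rw [typeOf_interior hi0' e1, typeOf_interior hi0' e2]
  · have hgt : P.length < i := lt_of_le_of_ne hge (Ne.symm hi)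
    obtain ⟨n, rfl⟩ : ∃ n, i = P.length + 1 + n := ⟨i - P.length - 1, by omega⟩
    have hQidx : P.length + 1 + n = Q.length + 1 + n := by omega
    apply typeOf_congr (by omega)
    · rw [getElem?_append_cons_succ, hQidx, getElem?_append_cons_succ]
    · have h1 : P.length + 1 + n + 1 = P.length + 1 + (n + 1) := by omega
      have h2 : P.length + 1 + (n + 1) = Q.length + 1 + (n + 1) := by omega
      rw [h1, getElem?_append_cons_succ, h2, getElem?_append_cons_succ]
    · have h1 : P.length + 1 + n + 1 = P.length + 1 + (n + 1) := by omega
      have h2 : P.length + 1 + (n + 1) = Q.length + 1 + (n + 1) := by omega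
      rw [h1, drop_append_cons, h2, drop_append_cons]

lemma typeOf_ne_at_idx {P Q S : List (CaretPos × Bool)} {p q : CaretPos × Bool}
    (hlen : P.length = Q.length) (h0 : P.length ≠ 0)
    (hpq : (p.1 ≠ CaretPos.right ∧ q.1 = CaretPos.right) ∨
           (p.1 = CaretPos.right ∧ q.1 ≠ CaretPos.right)) :
    typeOf (P ++ p :: S) P.length ≠ typeOf (Q ++ q :: S) P.length := by
  have e1 : (P ++ p :: S)[P.length]? = some p := getElem?_append_cons_self P S p
  have e2 : (Q ++ q :: S)[P.length]? = some q := by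
    rw [hlen]; exact getElem?_append_cons_self Q S q
  obtain ⟨p1, p2⟩ := p
  obtain ⟨q1, q2⟩ := q
  rcases hpq with ⟨hp, hq⟩ | ⟨hp, hq⟩
  · simp only at hp hq
    subst hq
    rcases typeOf_nonright_cases h0 e1 hp with h | h | h <;>
      rcases typeOf_right_cases h0 e2 with g | g | g <;>
        rw [h, g] <;> simp
  · simp only at hp hq
    subst hp
    rcases typeOf_right_cases h0 e1 with h | h | h <;>
      rcases typeOf_nonright_cases h0 e2 hq with g | g | g <;>
        rw [h, g] <;> simp

/-- The common combinatorial core: if the info lists of `Tm` and `Sm` agree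
except at one position, where the entry changes between a right caret and a
non-right caret, then exactly one pair of caret types changes. -/
lemma exists_unique_change (m : ℕ) (Tm Sm Tp : BinTree)
    (P Q S : List (CaretPos × Bool)) (p q : CaretPos × Bool)
    (hT : infoList Tm = P ++ p :: S) (hS : infoList Sm = Q ++ q :: S)
    (hTm : Tm.numCarets = m + 1)
    (hPQ : List.Forall₂ InfoRel P Q)
    (hPnr : ∀ x ∈ P, x.1 ≠ CaretPos.right)
    (hj0 : P.length ≠ 0)
    (hpq : (p.1 ≠ CaretPos.right ∧ q.1 = CaretPos.right) ∨
           (p.1 = CaretPos.right ∧ q.1 ≠ CaretPos.right)) :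
    ∃! i : ℕ, i ≤ m ∧
      (caretTypeAt Sm i, caretTypeAt Tp i) ≠ (caretTypeAt Tm i, caretTypeAt Tp i) := by
  have hjm : P.length ≤ m := by
    have h1 : (infoList Tm).length = m + 1 := by rw [infoList_length, hTm]
    rw [hT] at h1
    simp only [List.length_append, List.length_cons] at h1
    omega
  have hne : caretTypeAt Sm P.length ≠ caretTypeAt Tm P.length := by
    unfold caretTypeAt
    rw [hT, hS]
    exact fun hEq => typeOf_ne_at_idx hPQ.length_eq hj0 hpq hEq.symm
  refine ⟨P.length, ⟨hjm, ?_⟩, ?_⟩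
  · intro hEq
    exact hne ((Prod.mk.injEq _ _ _ _).mp hEq).1
  · rintro i ⟨him, hnei⟩
    by_contra hni
    apply hnei
    have : caretTypeAt Sm i = caretTypeAt Tm i := by
      unfold caretTypeAt
      rw [hT, hS]
      exact (typeOf_eq_of_ne_idx hPQ hPnr hni).symm
    rw [this]

/-! ### Algebra of the generators `x n` and leaf-exponent products -/

section XAlgebra

open BinTree

lemma x_zero : x 0 = x0 := rfl

lemma x_one : x 1 = x1 := by simp [x]

lemma x_succ (n : ℕ) (h : 1 ≤ n) : x (n + 1) = x0⁻¹ * x n * x0 := by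
  obtain ⟨m, rfl⟩ : ∃ m, n = m + 1 := ⟨n - 1, by omega⟩
  show (x0 ^ (m + 1))⁻¹ * x1 * x0 ^ (m + 1) = x0⁻¹ * ((x0 ^ m)⁻¹ * x1 * x0 ^ m) * x0
  rw [pow_succ]
  group

lemma rel1 : ⁅x0 * x1⁻¹, x0⁻¹ * x1 * x0⁆ = (1 : F) := by
  have h : ⁅FreeGroup.of (0 : Fin 2) * (FreeGroup.of (1 : Fin 2))⁻¹,
      (FreeGroup.of (0 : Fin 2))⁻¹ * FreeGroup.of (1 : Fin 2) * FreeGroup.of (0 : Fin 2)⁆ ∈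
        thompsonRels := Set.mem_insert _ _
  exact (QuotientGroup.eq_one_iff _).mpr (Subgroup.subset_normalClosure h)

lemma rel2 : ⁅x0 * x1⁻¹, x0⁻¹ * x0⁻¹ * x1 * x0 * x0⁆ = (1 : F) := by
  have h : ⁅FreeGroup.of (0 : Fin 2) * (FreeGroup.of (1 : Fin 2))⁻¹,
      (FreeGroup.of (0 : Fin 2))⁻¹ * (FreeGroup.of (0 : Fin 2))⁻¹ * FreeGroup.of (1 : Fin 2) *
        FreeGroup.of (0 : Fin 2) * FreeGroup.of (0 : Fin 2)⁆ ∈ thompsonRels := by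
    exact Set.mem_insert_of_mem _ rfl
  exact (QuotientGroup.eq_one_iff _).mpr (Subgroup.subset_normalClosure h)

lemma x_two : x 2 = x0⁻¹ * x1 * x0 := by simp [x, pow_one]

lemma x_three : x 3 = x0⁻¹ * x0⁻¹ * x1 * x0 * x0 := by
  show (x0 ^ 2)⁻¹ * x1 * x0 ^ 2 = _
  rw [pow_two]
  group

lemma x_conj_base2 : x1⁻¹ * x 2 * x1 = x 3 := by
  have h := commutatorElement_eq_one_iff_mul_comm.mp rel1
  rw [← x_two] at h
  -- h : (x0 * x1⁻¹) * x 2 = x 2 * (x0 * x1⁻¹)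
  have h3 : x 3 = x0⁻¹ * x 2 * x0 := x_succ 2 (by omega)
  rw [h3]
  have := congrArg (fun y => x0⁻¹ * y * x1) h
  simpa [mul_assoc] using this

lemma x_conj_base3 : x1⁻¹ * x 3 * x1 = x 4 := by
  have h := commutatorElement_eq_one_iff_mul_comm.mp rel2
  rw [← x_three] at h
  have h4 : x 4 = x0⁻¹ * x 3 * x0 := x_succ 3 (by omega)
  rw [h4]
  have := congrArg (fun y => x0⁻¹ * y * x1) h
  simpa [mul_assoc] using this

lemma x_conj_shift {i j : ℕ} (hi : 1 ≤ i) (hj : 1 ≤ j)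
    (h : (x i)⁻¹ * x j * x i = x (j + 1)) :
    (x (i + 1))⁻¹ * x (j + 1) * x (i + 1) = x (j + 2) := by
  have e1 : x (i + 1) = x0⁻¹ * x i * x0 := x_succ i hi
  have e2 : x (j + 1) = x0⁻¹ * x j * x0 := x_succ j hj
  have e3 : x (j + 2) = x0⁻¹ * x (j + 1) * x0 := x_succ (j + 1) (by omega)
  rw [e1, e2, e3, ← h]
  group

/-- `x1⁻¹ xⱼ x1 = x_{j+1}` for `j ≥ 2`. -/
lemma x_conj_one : ∀ j, 2 ≤ j → x1⁻¹ * x j * x1 = x (j + 1) := by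
  intro j
  induction j using Nat.strong_induction_on with
  | _ j ih =>
    intro hj
    match j, hj with
    | 2, _ => exact x_conj_base2
    | 3, _ => exact x_conj_base3
    | (k + 4), _ =>
      have h1 : x1⁻¹ * x 2 * x1 = x 3 := x_conj_base2
      have hprev : x1⁻¹ * x (k + 3) * x1 = x (k + 4) := ih (k + 3) (by omega) (by omega)
      have hkm2 : x1⁻¹ * x (k + 2) * x1 = x (k + 3) := ih (k + 2) (by omega) (by omega)
      -- shift hkm2 : S(1, k+2) once and twice
      have s2 : (x 2)⁻¹ * x (k + 3) * x 2 = x (k + 4) := by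
        have := x_conj_shift (i := 1) (j := k + 2) (by omega) (by omega) (by rw [x_one]; exact hkm2)
        simpa using this
      have s3 : (x 3)⁻¹ * x (k + 4) * x 3 = x (k + 5) := by
        have := x_conj_shift (i := 2) (j := k + 3) (by omega) (by omega) s2
        simpa using this
      calc x1⁻¹ * x (k + 4) * x1
          = (x1⁻¹ * x 2 * x1)⁻¹ * (x1⁻¹ * x (k + 3) * x1) * (x1⁻¹ * x 2 * x1) := by
            rw [← s2]; group
        _ = (x 3)⁻¹ * x (k + 4) * x 3 := by rw [h1, hprev]
        _ = x (k + 5) := s3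

/-- The master relation: `xᵢ⁻¹ xⱼ xᵢ = x_{j+1}` for `i < j`. -/
lemma x_conj : ∀ i j : ℕ, i < j → (x i)⁻¹ * x j * x i = x (j + 1) := by
  intro i
  induction i with
  | zero =>
    intro j hj
    rw [x_zero, (x_succ j (by omega) : x (j + 1) = _)]
  | succ i' ih =>
    intro j hj
    rcases Nat.eq_zero_or_pos i' with rfl | hi'
    · rw [show (0 : ℕ) + 1 = 1 from rfl, x_one]
      exact x_conj_one j (by omega)
    · obtain ⟨jj, rfl⟩ : ∃ jj, j = jj + 1 := ⟨j - 1, by omega⟩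
      exact x_conj_shift (by omega) (by omega) (ih jj (by omega))

lemma x_mul_swap {i j : ℕ} (h : i < j) : x j * x i = x i * x (j + 1) := by
  rw [← x_conj i j h]
  group

/-- Indexed product of generators `x_{d} ^ e₀ · x_{d+1} ^ e₁ ⋯`. -/
def prodE (d : ℕ) (L : List ℕ) : F := ((L.zipIdx d).map fun p => x p.2 ^ p.1).prod

lemma prodE_nil (d : ℕ) : prodE d [] = 1 := rfl

lemma prodE_cons (d e : ℕ) (L : List ℕ) :
    prodE d (e :: L) = x d ^ e * prodE (d + 1) L := by
  simp [prodE, List.zipIdx_cons]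

lemma posElt_eq (T : BinTree) : posElt T = prodE 0 (exps T) := rfl

lemma prodE_append (d : ℕ) (L M : List ℕ) :
    prodE d (L ++ M) = prodE d L * prodE (d + L.length) M := by
  induction L generalizing d with
  | nil => simp [prodE_nil]
  | cons e L ih =>
    rw [List.cons_append, prodE_cons, prodE_cons, ih (d + 1), mul_assoc, List.length_cons,
      show d + (L.length + 1) = d + 1 + L.length from by omega]

lemma expsAux_ne_nil (t : BinTree) : expsAux t ≠ [] := by
  induction t with
  | leaf => simp [expsAux]
  | node l r ihl ihr =>
    rw [expsAux]
    intro h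
    rcases List.append_eq_nil_iff.mp h with ⟨_, h2⟩
    exact ihr h2

lemma expsAux_length (t : BinTree) : (expsAux t).length = t.numLeaves := by
  induction t with
  | leaf => rfl
  | node l r ihl ihr =>
    rw [expsAux]
    obtain ⟨a, as, hl⟩ : ∃ a as, expsAux l = a :: as := by
      rcases h : expsAux l with _ | ⟨a, as⟩
      · exact absurd h (expsAux_ne_nil l)
      · exact ⟨a, as, rfl⟩
    rw [hl]
    rw [hl] at ihl
    simp only [List.length_append, List.length_cons, numLeaves]
    simp only [List.length_cons] at ihl
    omega

lemma prodE_factor (l r : BinTree) (d : ℕ) :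
    prodE d (expsAux (BinTree.node l r)) =
      x d * prodE d (expsAux l) * prodE (d + l.numLeaves) (expsAux r) := by
  obtain ⟨a, as, hl⟩ : ∃ a as, expsAux l = a :: as := by
    rcases h : expsAux l with _ | ⟨a, as⟩
    · exact absurd h (expsAux_ne_nil l)
    · exact ⟨a, as, rfl⟩
  have hlen : as.length + 1 = l.numLeaves := by
    have := expsAux_length l
    rw [hl] at this
    simpa using this
  rw [expsAux, hl]
  rw [List.cons_append, prodE_cons, prodE_append, prodE_cons]
  rw [pow_succ']
  have : d + 1 + as.length = d + l.numLeaves := by omega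
  rw [this]
  group

/-- Key conjugation identity: pushing a generator through the positive word
of a left subtree shifts its index by the number of leaves. -/
lemma prodE_conj (t : BinTree) : ∀ d j : ℕ,
    x (d + j + 1) * prodE d (expsAux t) =
      prodE d (expsAux t) * x (d + t.numLeaves + j) := by
  induction t with
  | leaf =>
    intro d j
    show x (d + j + 1) * prodE d [0] = prodE d [0] * x (d + 1 + j)
    rw [prodE_cons, prodE_nil, pow_zero]
    have : d + j + 1 = d + 1 + j := by omega
    rw [this]
    group
  | node l r ihl ihr =>
    intro d j
    rw [prodE_factor]
    have h1 : x (d + j + 1) * x d = x d * x (d + j + 1 + 1) := x_mul_swap (by omega)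
    calc x (d + j + 1) * (x d * prodE d (expsAux l) * prodE (d + l.numLeaves) (expsAux r))
        = x d * (x (d + (j + 1) + 1) * prodE d (expsAux l)) * prodE (d + l.numLeaves) (expsAux r) := by
          rw [show d + (j + 1) + 1 = d + j + 1 + 1 by omega, ← mul_assoc, ← mul_assoc, h1]
          group
      _ = x d * (prodE d (expsAux l) * x (d + l.numLeaves + (j + 1))) * prodE (d + l.numLeaves) (expsAux r) := by
          rw [ihl d (j + 1)]
      _ = x d * prodE d (expsAux l) * (x ((d + l.numLeaves) + j + 1) * prodE (d + l.numLeaves) (expsAux r)) := by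
          rw [show d + l.numLeaves + (j + 1) = (d + l.numLeaves) + j + 1 by omega]
          group
      _ = x d * prodE d (expsAux l) * (prodE (d + l.numLeaves) (expsAux r) * x ((d + l.numLeaves) + r.numLeaves + j)) := by
          rw [ihr (d + l.numLeaves) j]
      _ = x d * prodE d (expsAux l) * prodE (d + l.numLeaves) (expsAux r) * x (d + (BinTree.node l r).numLeaves + j) := by
          rw [show (d + l.numLeaves) + r.numLeaves + j = d + (BinTree.node l r).numLeaves + j by
            simp [numLeaves]; omega]
          group

lemma posElt_rotL (a b c : BinTree) :
    posElt (BinTree.node (BinTree.node a b) c) =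
      x 0 * posElt (BinTree.node a (BinTree.node b c)) := by
  rw [posElt_eq, posElt_eq]
  simp only [exps, prodE_append, prodE_factor, expsAux_length, numLeaves, List.append_assoc,
    List.length_append, Nat.zero_add, Nat.add_assoc]
  group

lemma posElt_rotR (t a b c : BinTree) :
    posElt (BinTree.node t (BinTree.node (BinTree.node a b) c)) =
      x 1 * posElt (BinTree.node t (BinTree.node a (BinTree.node b c))) := by
  rw [posElt_eq, posElt_eq]
  have hconj : x 1 * prodE 0 (expsAux t) = prodE 0 (expsAux t) * x t.numLeaves := by
    have := prodE_conj t 0 0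
    simpa using this
  simp only [exps, prodE_append, prodE_factor, expsAux_length, numLeaves, List.append_assoc,
    List.length_append, Nat.zero_add, Nat.add_assoc]
  rw [show Thompson.x 1 *
      (Thompson.prodE 0 t.expsAux *
        (Thompson.prodE t.numLeaves a.expsAux *
          (Thompson.prodE (t.numLeaves + a.numLeaves) b.expsAux *
            Thompson.prodE (t.numLeaves + (a.numLeaves + b.numLeaves)) c.exps))) =
      (Thompson.x 1 * Thompson.prodE 0 t.expsAux) *
        (Thompson.prodE t.numLeaves a.expsAux *
          (Thompson.prodE (t.numLeaves + a.numLeaves) b.expsAux *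
            Thompson.prodE (t.numLeaves + (a.numLeaves + b.numLeaves)) c.exps)) from by group,
    hconj]
  group

lemma toF_mul_x0 (a b c Tp : BinTree) :
    toF (BinTree.node (BinTree.node a b) c) Tp * x0 =
      toF (BinTree.node a (BinTree.node b c)) Tp := by
  unfold toF
  rw [posElt_rotL, x_zero]
  group

lemma toF_mul_x0_inv (a b c Tp : BinTree) :
    toF (BinTree.node a (BinTree.node b c)) Tp * x0⁻¹ =
      toF (BinTree.node (BinTree.node a b) c) Tp := by
  rw [← toF_mul_x0 a b c Tp]
  group

lemma toF_mul_x1 (t a b c Tp : BinTree) :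
    toF (BinTree.node t (BinTree.node (BinTree.node a b) c)) Tp * x1 =
      toF (BinTree.node t (BinTree.node a (BinTree.node b c))) Tp := by
  unfold toF
  rw [posElt_rotR, x_one]
  group

lemma toF_mul_x1_inv (t a b c Tp : BinTree) :
    toF (BinTree.node t (BinTree.node a (BinTree.node b c))) Tp * x1⁻¹ =
      toF (BinTree.node t (BinTree.node (BinTree.node a b) c)) Tp := by
  rw [← toF_mul_x1 t a b c Tp]
  group

end XAlgebra



/-! ### The Cantor-space representation of `F` -/

/-- Cantor space. -/
def C : Type := ℕ → Bool

/-- Prepend a bit. -/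
def cs (b : Bool) (s : C) : C := fun n => match n with
  | 0 => b
  | n + 1 => s n

/-- Tail. -/
def tl (s : C) : C := fun n => s (n + 1)

@[simp] lemma cs_zero (b : Bool) (s : C) : cs b s 0 = b := rfl
@[simp] lemma cs_succ (b : Bool) (s : C) (n : ℕ) : cs b s (n + 1) = s n := rfl
@[simp] lemma tl_cs (b : Bool) (s : C) : tl (cs b s) = s := rfl

lemma cs_eta (s : C) : cs (s 0) (tl s) = s := by
  funext n
  cases n <;> rfl

lemma cs_injective (b : Bool) : Function.Injective (cs b) := by
  intro s t h
  have := congrArg tl h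
  simpa using this

/-- Forward map of the generator `x₀`: `0u ↦ 00u`, `10u ↦ 01u`, `11u ↦ 1u`. -/
def t0 (s : C) : C :=
  if s 0 = false then cs false s
  else if s 1 = false then cs false (cs true (tl (tl s))) else tl s

/-- Inverse of `t0`: `00u ↦ 0u`, `01u ↦ 10u`, `1u ↦ 11u`. -/
def u0 (s : C) : C :=
  if s 0 = true then cs true s
  else if s 1 = false then tl s else cs true (cs false (tl (tl s)))

@[simp] lemma t0_f (u : C) : t0 (cs false u) = cs false (cs false u) := by simp [t0]
@[simp] lemma t0_tf (u : C) : t0 (cs true (cs false u)) = cs false (cs true u) := by simp [t0]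
@[simp] lemma t0_tt (u : C) : t0 (cs true (cs true u)) = cs true u := by simp [t0]
@[simp] lemma u0_t (u : C) : u0 (cs true u) = cs true (cs true u) := by simp [u0]
@[simp] lemma u0_ff (u : C) : u0 (cs false (cs false u)) = cs false u := by simp [u0]
@[simp] lemma u0_ft (u : C) : u0 (cs false (cs true u)) = cs true (cs false u) := by simp [u0]

lemma cs_eta2 (s : C) : cs (s 0) (cs (s 1) (tl (tl s))) = s := by
  funext n
  cases n with
  | zero => rfl
  | succ n => cases n <;> rfl

/-- The permutation `X₀` of Cantor space. -/
def X0p : Equiv.Perm C where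
  toFun := t0
  invFun := u0
  left_inv := by
    intro s
    rcases hb0 : s 0 <;> rcases hb1 : s 1 <;>
      (rw [← cs_eta2 s, hb0, hb1]; simp)
  right_inv := by
    intro s
    rcases hb0 : s 0 <;> rcases hb1 : s 1 <;>
      (rw [← cs_eta2 s, hb0, hb1]; simp)

@[simp] lemma X0p_f (u : C) : X0p (cs false u) = cs false (cs false u) := t0_f u
@[simp] lemma X0p_tf (u : C) : X0p (cs true (cs false u)) = cs false (cs true u) := t0_tf u
@[simp] lemma X0p_tt (u : C) : X0p (cs true (cs true u)) = cs true u := t0_tt u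
@[simp] lemma X0p_inv_t (u : C) : X0p⁻¹ (cs true u) = cs true (cs true u) := u0_t u
@[simp] lemma X0p_inv_ff (u : C) : X0p⁻¹ (cs false (cs false u)) = cs false u := u0_ff u
@[simp] lemma X0p_inv_ft (u : C) : X0p⁻¹ (cs false (cs true u)) = cs true (cs false u) := u0_ft u

/-- Lift a permutation to act on the right half (the `1`-cylinder). -/
def liftP (σ : Equiv.Perm C) : Equiv.Perm C where
  toFun := fun s => if s 0 = true then cs true (σ (tl s)) else s
  invFun := fun s => if s 0 = true then cs true (σ⁻¹ (tl s)) else s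
  left_inv := by
    intro s
    rcases hb : s 0
    · simp [hb]
    · rw [← cs_eta s, hb]
      simp
  right_inv := by
    intro s
    rcases hb : s 0
    · simp [hb]
    · rw [← cs_eta s, hb]
      simp

@[simp] lemma liftP_t (σ : Equiv.Perm C) (u : C) : liftP σ (cs true u) = cs true (σ u) := by
  simp [liftP]
@[simp] lemma liftP_f (σ : Equiv.Perm C) (u : C) : liftP σ (cs false u) = cs false u := by
  simp [liftP]
@[simp] lemma liftP_inv_t (σ : Equiv.Perm C) (u : C) :
    (liftP σ)⁻¹ (cs true u) = cs true (σ⁻¹ u) := by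
  show (liftP σ).symm _ = _
  simp [liftP]
@[simp] lemma liftP_inv_f (σ : Equiv.Perm C) (u : C) :
    (liftP σ)⁻¹ (cs false u) = cs false u := by
  show (liftP σ).symm _ = _
  simp [liftP]

/-- The permutation `X₁`. -/
def X1p : Equiv.Perm C := liftP X0p

/-- Conjugation by `X₀` shifts lifted permutations one level deeper. -/
lemma conjL (σ : Equiv.Perm C) : X0p⁻¹ * liftP σ * X0p = liftP (liftP σ) := by
  ext s
  rw [← cs_eta2 s]
  rcases s 0 <;> rcases s 1 <;>
    simp [Equiv.Perm.mul_apply]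

lemma cs_eta3 (s : C) : cs (s 0) (cs (s 1) (cs (s 2) (tl (tl (tl s))))) = s := by
  funext n
  cases n with
  | zero => rfl
  | succ n => cases n with
    | zero => rfl
    | succ n => cases n <;> rfl

/-- `X₀X₁⁻¹` commutes with any doubly-lifted permutation. -/
lemma comm_key (σ : Equiv.Perm C) :
    (X0p * X1p⁻¹) * liftP (liftP σ) = liftP (liftP σ) * (X0p * X1p⁻¹) := by
  ext s
  rw [← cs_eta3 s]
  rcases s 0 <;> rcases s 1 <;> rcases s 2 <;>
    simp [Equiv.Perm.mul_apply, X1p]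

/-- The representation of `F` on Cantor space. -/
def phi : F →* Equiv.Perm C := by
  apply PresentedGroup.toGroup (f := fun i : Fin 2 => if i = 0 then X0p else X1p)
  intro r hr
  have e2 : X0p⁻¹ * X1p * X0p = liftP (liftP X0p) := by
    rw [show X0p⁻¹ * X1p * X0p = X0p⁻¹ * liftP X0p * X0p from rfl, conjL]
  rcases hr with rfl | rfl
  · simp only [map_commutatorElement, map_mul, map_inv, FreeGroup.lift_apply_of]
    norm_num
    rw [e2]
    exact commutatorElement_eq_one_iff_mul_comm.mpr (comm_key X0p)
  · simp only [map_commutatorElement, map_mul, map_inv, FreeGroup.lift_apply_of]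
    norm_num
    have e3 : X0p⁻¹ * X0p⁻¹ * X1p * X0p * X0p = liftP (liftP (liftP X0p)) := by
      have : X0p⁻¹ * X0p⁻¹ * X1p * X0p * X0p = X0p⁻¹ * (X0p⁻¹ * X1p * X0p) * X0p := by group
      rw [this, e2, conjL]
    rw [e3]
    exact commutatorElement_eq_one_iff_mul_comm.mpr (comm_key (liftP X0p))

lemma phi_x0 : phi x0 = X0p := by
  show phi (PresentedGroup.of 0) = X0p
  rw [phi, PresentedGroup.toGroup.of]
  norm_num

lemma phi_x1 : phi x1 = X1p := by
  show phi (PresentedGroup.of 1) = X1p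
  rw [phi, PresentedGroup.toGroup.of]
  norm_num

/-- The permutations representing the generators `x n`. -/
def XpP : ℕ → Equiv.Perm C
  | 0 => X0p
  | n + 1 => liftP (XpP n)

lemma phi_x (n : ℕ) : phi (x n) = XpP n := by
  induction n using Nat.strong_induction_on with
  | _ n ih =>
    match n with
    | 0 => exact phi_x0
    | 1 => rw [x_one, phi_x1]; rfl
    | (n + 2) =>
      rw [x_succ (n + 1) (by omega), map_mul, map_mul, map_inv, phi_x0, ih (n + 1) (by omega)]
      show X0p⁻¹ * liftP (XpP n) * X0p = XpP (n + 2)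
      rw [conjL]
      rfl

/-- Prepend a finite word to a sequence. -/
def app (w : List Bool) (s : C) : C := w.foldr cs s

@[simp] lemma app_nil (s : C) : app [] s = s := rfl
@[simp] lemma app_cons (b : Bool) (w : List Bool) (s : C) :
    app (b :: w) s = cs b (app w s) := rfl

lemma app_append (w v : List Bool) (s : C) : app (w ++ v) s = app w (app v s) := by
  induction w with
  | nil => rfl
  | cons b w ih => simp [ih]

/-- Prepend `d` ones. -/
def ones : ℕ → C → C
  | 0, s => s
  | d + 1, s => cs true (ones d s)

lemma ones_add (a b : ℕ) (s : C) : ones (a + b) s = ones a (ones b s) := by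
  induction a with
  | zero => simp [ones]
  | succ a ih => rw [show a + 1 + b = (a + b) + 1 from by omega]; simp [ones, ih]

lemma ones_succ (d : ℕ) (s : C) : ones (d + 1) s = ones d (cs true s) := by
  rw [show d + 1 = d + (0 + 1) from rfl, ones_add]
  rfl

open BinTree

lemma numLeaves_pos (t : BinTree) : 0 < t.numLeaves := by
  induction t with
  | leaf => simp [numLeaves]
  | node l r ihl ihr => simp [numLeaves]; omega

lemma numLeaves_eq_numCarets_succ (t : BinTree) : t.numLeaves = t.numCarets + 1 := by
  induction t with
  | leaf => rfl
  | node l r ihl ihr => simp [numLeaves, numCarets, ihl, ihr]; omega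

/-- The address (sequence of left/right choices, `false` = left) of the
`k`-th leaf of a tree. -/
def addr : BinTree → ℕ → List Bool
  | .leaf, _ => []
  | .node l r, k =>
      if k < l.numLeaves then false :: addr l k else true :: addr r (k - l.numLeaves)

/-- Perm-level model of `prodE d (expsAux t)`. -/
def nuP : BinTree → ℕ → Equiv.Perm C
  | .leaf, _ => 1
  | .node l r, d => XpP d * nuP l d * nuP r (d + l.numLeaves)

/-- Perm-level model of `prodE d (exps t)`. -/
def muP : BinTree → ℕ → Equiv.Perm C
  | .leaf, _ => 1
  | .node l r, d => nuP l d * muP r (d + l.numLeaves)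

lemma phi_prodE_expsAux (t : BinTree) : ∀ d, phi (prodE d (expsAux t)) = nuP t d := by
  induction t with
  | leaf =>
    intro d
    show phi (prodE d [0]) = 1
    rw [prodE_cons, prodE_nil, pow_zero, one_mul, map_one]
  | node l r ihl ihr =>
    intro d
    rw [prodE_factor, map_mul, map_mul, ihl, ihr, show phi (x d) = XpP d from phi_x d]
    rfl

lemma phi_prodE_exps (t : BinTree) : ∀ d, phi (prodE d (exps t)) = muP t d := by
  induction t with
  | leaf =>
    intro d
    show phi (prodE d [0]) = 1
    rw [prodE_cons, prodE_nil, pow_zero, one_mul, map_one]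
  | node l r ihl ihr =>
    intro d
    rw [show exps (BinTree.node l r) = expsAux l ++ exps r from rfl, prodE_append,
      expsAux_length, map_mul, phi_prodE_expsAux, ihr]
    rfl

lemma phi_posElt (T : BinTree) : phi (posElt T) = muP T 0 := by
  rw [posElt_eq, phi_prodE_exps]

/-! Action of `XpP d` on sequences. -/

lemma XpP_mid0 (d : ℕ) (u : C) :
    XpP d (ones d (cs false u)) = ones d (cs false (cs false u)) := by
  induction d with
  | zero => simp [XpP, ones]
  | succ d ih => show liftP (XpP d) (cs true _) = _; simp [ones, ih]

lemma XpP_mid1 (d : ℕ) (u : C) :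
    XpP d (ones (d + 1) (cs false u)) = ones d (cs false (cs true u)) := by
  induction d with
  | zero => simp [XpP, ones]
  | succ d ih =>
    show liftP (XpP d) (cs true (ones (d + 1) (cs false u))) =
      cs true (ones d (cs false (cs true u)))
    rw [liftP_t, ih]

lemma XpP_end (d : ℕ) (u : C) : XpP d (ones (d + 2) u) = ones (d + 1) u := by
  induction d with
  | zero => show X0p (cs true (cs true u)) = cs true u; simp
  | succ d ih =>
    show liftP (XpP d) (cs true (ones (d + 2) u)) = cs true (ones (d + 1) u)
    rw [liftP_t, ih]

lemma XpP_fix (d e : ℕ) (u : C) (h : e < d) :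
    XpP d (ones e (cs false u)) = ones e (cs false u) := by
  induction d generalizing e with
  | zero => omega
  | succ d ih =>
    cases e with
    | zero => exact liftP_f _ _
    | succ e =>
      show liftP (XpP d) (cs true (ones e (cs false u))) = _
      rw [liftP_t, ih e (by omega)]
      rfl

/-! Action of `nuP` and `muP` on sequences. -/

lemma nuP_fix (t : BinTree) : ∀ d e u, e < d →
    nuP t d (ones e (cs false u)) = ones e (cs false u) := by
  induction t with
  | leaf => intro d e u _; rfl
  | node l r ihl ihr =>
    intro d e u h
    show XpP d (nuP l d (nuP r (d + l.numLeaves) (ones e (cs false u)))) = _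
    rw [ihr _ _ _ (by omega), ihl _ _ _ h, XpP_fix _ _ _ h]

lemma nuP_end (t : BinTree) : ∀ d u,
    nuP t d (ones (d + t.numLeaves) u) = ones (d + 1) u := by
  induction t with
  | leaf => intro d u; rfl
  | node l r ihl ihr =>
    intro d u
    show XpP d (nuP l d (nuP r (d + l.numLeaves) (ones (d + (BinTree.node l r).numLeaves) u))) = _
    rw [show d + (BinTree.node l r).numLeaves = (d + l.numLeaves) + r.numLeaves from by
      simp [numLeaves]; omega]
    rw [ihr, ones_succ, ihl d (cs true u), ← ones_succ, XpP_end]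

lemma nuP_mid (t : BinTree) : ∀ d k s, k < t.numLeaves →
    nuP t d (ones (d + k) (cs false s)) = ones d (cs false (app (addr t k) s)) := by
  induction t with
  | leaf =>
    intro d k s hk
    have : k = 0 := by
      have := numLeaves_pos BinTree.leaf
      simp [numLeaves] at hk
      omega
    subst this
    simp [addr, nuP]
  | node l r ihl ihr =>
    intro d k s hk
    show XpP d (nuP l d (nuP r (d + l.numLeaves) (ones (d + k) (cs false s)))) = _
    rcases Nat.lt_or_ge k l.numLeaves with hkl | hkl
    · rw [nuP_fix r _ _ _ (by omega), ihl d k s hkl, XpP_mid0]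
      rw [show addr (BinTree.node l r) k = false :: addr l k from by rw [addr, if_pos hkl]]
      rfl
    · obtain ⟨k', rfl⟩ : ∃ k', k = l.numLeaves + k' := ⟨k - l.numLeaves, by omega⟩
      have hk' : k' < r.numLeaves := by
        simp [numLeaves] at hk
        omega
      rw [show d + (l.numLeaves + k') = (d + l.numLeaves) + k' from by omega,
        ihr (d + l.numLeaves) k' s hk']
      rw [nuP_end l d (cs false (app (addr r k') s)), XpP_mid1]
      rw [show addr (BinTree.node l r) (l.numLeaves + k') = true :: addr r k' from by
        simp only [addr]
        rw [if_neg (by omega), Nat.add_sub_cancel_left]]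
      rfl


lemma muP_fix (t : BinTree) : ∀ d e u, e < d →
    muP t d (ones e (cs false u)) = ones e (cs false u) := by
  induction t with
  | leaf => intro d e u _; rfl
  | node l r ihl ihr =>
    intro d e u h
    show nuP l d (muP r (d + l.numLeaves) (ones e (cs false u))) = _
    rw [ihr _ _ _ (by omega), nuP_fix _ _ _ _ h]

lemma muP_mid (t : BinTree) : ∀ d k s, k + 1 < t.numLeaves →
    muP t d (ones (d + k) (cs false s)) = ones d (app (addr t k) s) := by
  induction t with
  | leaf =>
    intro d k s hk
    simp [numLeaves] at hk
  | node l r ihl ihr =>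
    intro d k s hk
    show nuP l d (muP r (d + l.numLeaves) (ones (d + k) (cs false s))) = _
    rcases Nat.lt_or_ge k l.numLeaves with hkl | hkl
    · rw [muP_fix r _ _ _ (by omega), nuP_mid l d k s hkl]
      rw [show addr (BinTree.node l r) k = false :: addr l k from by
        simp only [addr]; rw [if_pos hkl]]
      rfl
    · obtain ⟨k', rfl⟩ : ∃ k', k = l.numLeaves + k' := ⟨k - l.numLeaves, by omega⟩
      have hk' : k' + 1 < r.numLeaves := by
        simp [numLeaves] at hk
        omega
      rw [show d + (l.numLeaves + k') = (d + l.numLeaves) + k' from by omega,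
        ihr (d + l.numLeaves) k' s hk', nuP_end l d _, ones_succ]
      rw [show addr (BinTree.node l r) (l.numLeaves + k') = true :: addr r k' from by
        simp only [addr]; rw [if_neg (by omega), Nat.add_sub_cancel_left]]
      rfl

lemma muP_end (t : BinTree) : ∀ d k s, k + 1 = t.numLeaves →
    muP t d (ones (d + k) s) = ones d (app (addr t k) s) := by
  induction t with
  | leaf =>
    intro d k s hk
    have : k = 0 := by simp [numLeaves] at hk; omega
    subst this
    simp [addr, muP]
  | node l r ihl ihr =>
    intro d k s hk
    show nuP l d (muP r (d + l.numLeaves) (ones (d + k) s)) = _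
    have hrpos := numLeaves_pos r
    have hlpos := numLeaves_pos l
    have hnum : (BinTree.node l r).numLeaves = l.numLeaves + r.numLeaves := rfl
    obtain ⟨k', rfl⟩ : ∃ k', k = l.numLeaves + k' := ⟨k - l.numLeaves, by omega⟩
    have hk' : k' + 1 = r.numLeaves := by omega
    rw [show d + (l.numLeaves + k') = (d + l.numLeaves) + k' from by omega,
      ihr (d + l.numLeaves) k' s hk', nuP_end l d _, ones_succ]
    rw [show addr (BinTree.node l r) (l.numLeaves + k') = true :: addr r k' from by
      simp only [addr]; rw [if_neg (by omega), Nat.add_sub_cancel_left]]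
    rfl

/-- Rigidity: the permutation of a tree pair diagram maps each leaf cylinder
of the negative tree rigidly onto the corresponding leaf cylinder of the
positive tree. -/
lemma pair_rigid (A B : BinTree) (h : A.numLeaves = B.numLeaves)
    (k : ℕ) (hk : k < A.numLeaves) (s : C) :
    phi (toF A B) (app (addr A k) s) = app (addr B k) s := by
  unfold toF
  rw [map_mul, map_inv, phi_posElt, phi_posElt]
  show (muP B 0) ((muP A 0)⁻¹ (app (addr A k) s)) = app (addr B k) s
  rcases Nat.lt_or_ge (k + 1) A.numLeaves with hk1 | hk1
  · have hA : muP A 0 (ones (0 + k) (cs false s)) = ones 0 (app (addr A k) s) :=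
      muP_mid A 0 k s hk1
    have h1 : (muP A 0)⁻¹ (app (addr A k) s) = ones (0 + k) (cs false s) := by
      rw [show app (addr A k) s = ones 0 (app (addr A k) s) from rfl, ← hA,
        Equiv.Perm.inv_def, Equiv.symm_apply_apply]
    rw [h1]
    exact muP_mid B 0 k s (by omega)
  · have hk1' : k + 1 = A.numLeaves := by omega
    have hA : muP A 0 (ones (0 + k) s) = ones 0 (app (addr A k) s) :=
      muP_end A 0 k s hk1'
    have h1 : (muP A 0)⁻¹ (app (addr A k) s) = ones (0 + k) s := by
      rw [show app (addr A k) s = ones 0 (app (addr A k) s) from rfl, ← hA,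
        Equiv.Perm.inv_def, Equiv.symm_apply_apply]
    rw [h1]
    exact muP_end B 0 k s (by omega)


/-! ### Address combinatorics -/

lemma app_left_cancel : ∀ {w w' : List Bool}, (∀ s, app w s = app w' s) → w = w' := by
  intro w
  induction w with
  | nil =>
    intro w' h
    cases w' with
    | nil => rfl
    | cons b w' =>
      exfalso
      have := congrArg (fun s : C => s 0) (h (cs (!b) (fun _ => false)))
      have h' : (!b) = b := this; cases b <;> simp at h'
  | cons a w ih =>
    intro w' h
    cases w' with
    | nil =>
      exfalso
      have := congrArg (fun s : C => s 0) (h (cs (!a) (fun _ => false)))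
      have h' : a = (!a) := this; cases a <;> simp at h'
    | cons b w' =>
      have hab : a = b := by
        have := congrArg (fun s : C => s 0) (h (fun _ => false))
        exact this
      subst hab
      have htail : ∀ s, app w s = app w' s := by
        intro s
        have := congrArg tl (h s)
        simpa using this
      rw [ih htail]

lemma app_comparable : ∀ {w w' : List Bool} {u u' : C},
    app w u = app w' u' → w <+: w' ∨ w' <+: w := by
  intro w
  induction w with
  | nil => intro w' u u' _; exact Or.inl (List.nil_prefix)
  | cons a w ih =>
    intro w' u u' h
    cases w' with
    | nil => exact Or.inr (List.nil_prefix)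
    | cons b w' =>
      have hab : a = b := by
        have := congrFun h 0
        simpa using this
      subst hab
      have htail : app w u = app w' u' := by
        have := congrArg tl h
        simpa using this
      rcases ih htail with h' | h'
      · exact Or.inl (List.cons_prefix_cons.mpr ⟨rfl, h'⟩)
      · exact Or.inr (List.cons_prefix_cons.mpr ⟨rfl, h'⟩)

lemma exists_addr_prefix (T : BinTree) : ∀ s : C, ∃ k, k < T.numLeaves ∧ ∃ u, s = app (addr T k) u := by
  induction T with
  | leaf => intro s; exact ⟨0, by simp [BinTree.numLeaves], s, rfl⟩
  | node l r ihl ihr =>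
    intro s
    have hs : s = cs (s 0) (tl s) := (cs_eta s).symm
    rcases hb : s 0 with _ | _
    · obtain ⟨k, hk, u, hu⟩ := ihl (tl s)
      refine ⟨k, by simp [BinTree.numLeaves]; omega, u, ?_⟩
      rw [show addr (BinTree.node l r) k = false :: addr l k from by
        simp only [addr]; rw [if_pos hk]]
      rw [hs, hb, app_cons, hu]
    · obtain ⟨k, hk, u, hu⟩ := ihr (tl s)
      refine ⟨l.numLeaves + k, by simp [BinTree.numLeaves]; omega, u, ?_⟩
      rw [show addr (BinTree.node l r) (l.numLeaves + k) = true :: addr r k from by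
        simp only [addr]; rw [if_neg (by omega), Nat.add_sub_cancel_left]]
      rw [hs, hb, app_cons, hu]

lemma addr_node_left {l r : BinTree} {k : ℕ} (h : k < l.numLeaves) :
    addr (BinTree.node l r) k = false :: addr l k := by
  simp only [addr]; rw [if_pos h]

lemma addr_node_right {l r : BinTree} {k : ℕ} (h : l.numLeaves ≤ k) :
    addr (BinTree.node l r) k = true :: addr r (k - l.numLeaves) := by
  simp only [addr]; rw [if_neg (by omega)]

lemma addr_eq_nil : ∀ {T : BinTree} {k : ℕ}, addr T k = [] → T = BinTree.leaf := by
  intro T k h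
  cases T with
  | leaf => rfl
  | node l r =>
    exfalso
    rcases Nat.lt_or_ge k l.numLeaves with h' | h'
    · rw [show addr (BinTree.node l r) k = false :: addr l k from by
        simp only [addr]; rw [if_pos h']] at h
      simp at h
    · rw [show addr (BinTree.node l r) k = true :: addr r (k - l.numLeaves) from by
        simp only [addr]; rw [if_neg (by omega)]] at h
      simp at h

lemma addr_ne_nil {l r : BinTree} (k : ℕ) : addr (BinTree.node l r) k ≠ [] := by
  rcases Nat.lt_or_ge k l.numLeaves with h | h
  · rw [addr_node_left h]; simp
  · rw [addr_node_right h]; simp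

lemma exposedCaretPairs_node {l r : BinTree} (h : l ≠ BinTree.leaf ∨ r ≠ BinTree.leaf) :
    exposedCaretPairs (BinTree.node l r) =
      exposedCaretPairs l ++ (exposedCaretPairs r).map (· + l.numLeaves) := by
  rcases l with _ | ⟨l1, l2⟩ <;> rcases r with _ | ⟨r1, r2⟩
  · simp at h
  · rfl
  · rfl
  · rfl

/-- Characterization of exposed caret pairs by leaf addresses. -/
lemma mem_exposedCaretPairs_iff (T : BinTree) : ∀ m : ℕ,
    m ∈ exposedCaretPairs T ↔
      (m + 1 < T.numLeaves ∧
        ∃ z, addr T m = z ++ [false] ∧ addr T (m + 1) = z ++ [true]) := by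
  induction T with
  | leaf =>
    intro m
    simp [exposedCaretPairs, BinTree.numLeaves]
  | node l r ihl ihr =>
    intro m
    by_cases hll : l = BinTree.leaf ∧ r = BinTree.leaf
    · obtain ⟨rfl, rfl⟩ := hll
      constructor
      · intro hm
        have : m = 0 := by simpa [exposedCaretPairs] using hm
        subst this
        refine ⟨by simp [BinTree.numLeaves], [], ?_, ?_⟩ <;>
          simp [addr, BinTree.numLeaves]
      · rintro ⟨hm, z, h0, h1⟩
        have : m = 0 := by simp [BinTree.numLeaves] at hm; omega
        subst this
        simp [exposedCaretPairs]
    · have hor : l ≠ BinTree.leaf ∨ r ≠ BinTree.leaf := by tauto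
      rw [exposedCaretPairs_node hor]
      have hLl := numLeaves_pos l
      have hLr := numLeaves_pos r
      constructor
      · intro hm
        rcases List.mem_append.mp hm with hm | hm
        · obtain ⟨hb, z, h0, h1⟩ := (ihl m).mp hm
          exact ⟨by simp [BinTree.numLeaves]; omega, false :: z,
            by rw [addr_node_left (by omega), h0]; rfl,
            by rw [addr_node_left (by omega), h1]; rfl⟩
        · obtain ⟨m', hm', rfl⟩ := List.mem_map.mp hm
          obtain ⟨hb, z, h0, h1⟩ := (ihr m').mp hm'
          refine ⟨by simp [BinTree.numLeaves]; omega, true :: z, ?_, ?_⟩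
          · rw [addr_node_right (by omega), Nat.add_sub_cancel, h0]; rfl
          · rw [show m' + l.numLeaves + 1 = (m' + 1) + l.numLeaves from by omega,
              addr_node_right (by omega), Nat.add_sub_cancel, h1]; rfl
      · rintro ⟨hb, z, h0, h1⟩
        rcases Nat.lt_or_ge (m + 1) l.numLeaves with hc | hc
        · have h0' := h0; have h1' := h1
          rw [addr_node_left (by omega)] at h0'
          rw [addr_node_left hc] at h1'
          obtain ⟨z', rfl⟩ : ∃ z', z = false :: z' := by
            cases z with
            | nil => simp at h1'
            | cons zb z' =>
              cases zb
              · exact ⟨z', rfl⟩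
              · simp at h0'
          apply List.mem_append.mpr
          left
          exact (ihl m).mpr ⟨hc, z', by simpa using h0', by simpa using h1'⟩
        · rcases Nat.lt_or_ge m l.numLeaves with hc2 | hc2
          · -- m = numLeaves l - 1, boundary: impossible
            exfalso
            rw [addr_node_left hc2] at h0
            rw [addr_node_right (by omega)] at h1
            cases z with
            | nil =>
              simp at h0 h1
              exact hll ⟨addr_eq_nil h0, addr_eq_nil h1⟩
            | cons zb z' =>
              cases zb
              · simp at h1
              · simp at h0
          · have h0' := h0; have h1' := h1
            rw [addr_node_right hc2] at h0'
            rw [addr_node_right (by omega)] at h1'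
            obtain ⟨z', rfl⟩ : ∃ z', z = true :: z' := by
              cases z with
              | nil => simp at h0'
              | cons zb z' =>
                simp at h0'
                exact ⟨z', by rw [h0'.1]⟩
            apply List.mem_append.mpr
            right
            refine List.mem_map.mpr ⟨m - l.numLeaves, ?_, by omega⟩
            apply (ihr (m - l.numLeaves)).mpr
            refine ⟨by simp [BinTree.numLeaves] at hb; omega, z', by simpa using h0', ?_⟩
            rw [show m - l.numLeaves + 1 = m + 1 - l.numLeaves from by omega]
            simpa using h1'


/-- Every non-trivial tree has an exposed caret. -/
lemma exposed_any : ∀ T : BinTree, T ≠ BinTree.leaf →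
    ∃ m, m + 1 < T.numLeaves ∧
      ∃ z, addr T m = z ++ [false] ∧ addr T (m + 1) = z ++ [true] := by
  intro T
  induction T with
  | leaf => intro h; exact absurd rfl h
  | node l r ihl ihr =>
    intro _
    have hLl := numLeaves_pos l
    have hLr := numLeaves_pos r
    rcases eq_or_ne l BinTree.leaf with rfl | hl
    · rcases eq_or_ne r BinTree.leaf with rfl | hr
      · refine ⟨0, by simp [BinTree.numLeaves], [], ?_, ?_⟩
        · rw [addr_node_left (by simp [BinTree.numLeaves])]
          simp [addr]
        · rw [addr_node_right (by simp only [BinTree.numLeaves]; omega)]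
          simp [addr, BinTree.numLeaves]
      · obtain ⟨m, hm, z, h0, h1⟩ := ihr hr
        refine ⟨1 + m, by simp [BinTree.numLeaves]; omega, true :: z, ?_, ?_⟩
        · rw [addr_node_right (by simp only [BinTree.numLeaves]; omega)]
          simp [BinTree.numLeaves, h0]
        · rw [show 1 + m + 1 = 1 + (m + 1) from by omega,
            addr_node_right (by simp only [BinTree.numLeaves]; omega)]
          simp [BinTree.numLeaves, h1]
    · obtain ⟨m, hm, z, h0, h1⟩ := ihl hl
      refine ⟨m, by simp [BinTree.numLeaves]; omega, false :: z, ?_, ?_⟩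
      · rw [addr_node_left (by omega), h0]; rfl
      · rw [addr_node_left (by omega), h1]; rfl

/-- Below any strict prefix of a leaf address there is an exposed caret. -/
lemma exposed_below : ∀ (T : BinTree) (w : List Bool) (k : ℕ), k < T.numLeaves →
    w <+: addr T k → w ≠ addr T k →
    ∃ m, m + 1 < T.numLeaves ∧
      ∃ z, w <+: z ∧ addr T m = z ++ [false] ∧ addr T (m + 1) = z ++ [true] := by
  intro T
  induction T with
  | leaf =>
    intro w k _ hpre hne
    exfalso
    exact hne (List.prefix_nil.mp (by simpa [addr] using hpre))
  | node l r ihl ihr =>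
    intro w k hk hpre hne
    have hLl := numLeaves_pos l
    have hLr := numLeaves_pos r
    cases w with
    | nil =>
      obtain ⟨m, hm, z, h0, h1⟩ := exposed_any (BinTree.node l r) (by simp)
      exact ⟨m, hm, z, List.nil_prefix, h0, h1⟩
    | cons b w' =>
      rcases Nat.lt_or_ge k l.numLeaves with hkl | hkl
      · rw [addr_node_left hkl] at hpre hne
        obtain ⟨rfl, hpre'⟩ := List.cons_prefix_cons.mp hpre
        have hne' : w' ≠ addr l k := fun h => hne (by rw [h])
        obtain ⟨m, hm, z, hwz, h0, h1⟩ := ihl w' k hkl hpre' hne'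
        refine ⟨m, by simp [BinTree.numLeaves]; omega, false :: z,
          List.cons_prefix_cons.mpr ⟨rfl, hwz⟩, ?_, ?_⟩
        · rw [addr_node_left (by omega), h0]; rfl
        · rw [addr_node_left (by omega), h1]; rfl
      · rw [addr_node_right hkl] at hpre hne
        obtain ⟨rfl, hpre'⟩ := List.cons_prefix_cons.mp hpre
        have hne' : w' ≠ addr r (k - l.numLeaves) := fun h => hne (by rw [h])
        have hkr : k - l.numLeaves < r.numLeaves := by
          simp [BinTree.numLeaves] at hk; omega
        obtain ⟨m, hm, z, hwz, h0, h1⟩ := ihr w' (k - l.numLeaves) hkr hpre' hne'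
        refine ⟨l.numLeaves + m, by simp [BinTree.numLeaves]; omega, true :: z,
          List.cons_prefix_cons.mpr ⟨rfl, hwz⟩, ?_, ?_⟩
        · rw [addr_node_right (by omega), Nat.add_sub_cancel_left, h0]; rfl
        · rw [show l.numLeaves + m + 1 = l.numLeaves + (m + 1) from by omega,
            addr_node_right (by omega), Nat.add_sub_cancel_left, h1]; rfl

lemma numLeaves_eq_one {T : BinTree} (h : T.numLeaves = 1) : T = BinTree.leaf := by
  cases T with
  | leaf => rfl
  | node l r =>
    exfalso
    have := numLeaves_pos l
    have := numLeaves_pos r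
    simp [BinTree.numLeaves] at h
    omega

/-- `CT` refines `A`: every leaf cylinder of `CT` lies in one of `A`. -/
def Refines (A CT : BinTree) : Prop :=
  ∀ j < CT.numLeaves, ∃ k < A.numLeaves, addr A k <+: addr CT j

lemma refines_split {a1 a2 c1 c2 : BinTree}
    (h : Refines (BinTree.node a1 a2) (BinTree.node c1 c2)) :
    Refines a1 c1 ∧ Refines a2 c2 := by
  constructor
  · intro j hj
    obtain ⟨k, hk, hpre⟩ := h j (by simp [BinTree.numLeaves]; omega)
    rw [addr_node_left hj] at hpre
    rcases Nat.lt_or_ge k a1.numLeaves with hkl | hkl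
    · rw [addr_node_left hkl] at hpre
      exact ⟨k, hkl, (List.cons_prefix_cons.mp hpre).2⟩
    · rw [addr_node_right hkl] at hpre
      exact absurd (List.cons_prefix_cons.mp hpre).1 (by simp)
  · intro j hj
    obtain ⟨k, hk, hpre⟩ := h (c1.numLeaves + j) (by simp [BinTree.numLeaves]; omega)
    rw [addr_node_right (l := c1) (r := c2) (k := c1.numLeaves + j) (by omega),
      Nat.add_sub_cancel_left] at hpre
    rcases Nat.lt_or_ge k a1.numLeaves with hkl | hkl
    · rw [addr_node_left hkl] at hpre
      exact absurd (List.cons_prefix_cons.mp hpre).1 (by simp)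
    · rw [addr_node_right hkl] at hpre
      refine ⟨k - a1.numLeaves, by simp [BinTree.numLeaves] at hk; omega,
        (List.cons_prefix_cons.mp hpre).2⟩

lemma refines_le : ∀ A CT : BinTree, Refines A CT → A.numLeaves ≤ CT.numLeaves := by
  intro A
  induction A with
  | leaf => intro CT _; exact numLeaves_pos CT
  | node a1 a2 ih1 ih2 =>
    intro CT h
    cases CT with
    | leaf =>
      obtain ⟨k, hk, hpre⟩ := h 0 (by simp [BinTree.numLeaves])
      exact absurd (List.prefix_nil.mp (by simpa [addr] using hpre)) (addr_ne_nil k)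
    | node c1 c2 =>
      obtain ⟨h1, h2⟩ := refines_split h
      have := ih1 c1 h1
      have := ih2 c2 h2
      simp [BinTree.numLeaves]
      omega

lemma refines_eq : ∀ A CT : BinTree, Refines A CT → A.numLeaves = CT.numLeaves → A = CT := by
  intro A
  induction A with
  | leaf => intro CT _ hn; exact (numLeaves_eq_one hn.symm).symm
  | node a1 a2 ih1 ih2 =>
    intro CT h hn
    cases CT with
    | leaf =>
      exfalso
      have := numLeaves_pos a1
      have := numLeaves_pos a2
      simp [BinTree.numLeaves] at hn
      omega
    | node c1 c2 =>
      obtain ⟨h1, h2⟩ := refines_split h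
      have e1 := refines_le a1 c1 h1
      have e2 := refines_le a2 c2 h2
      have hn' : a1.numLeaves + a2.numLeaves = c1.numLeaves + c2.numLeaves := by
        simpa [BinTree.numLeaves] using hn
      rw [ih1 c1 h1 (by omega), ih2 c2 h2 (by omega)]

/-- Trees with the same leaf addresses coincide. -/
lemma addr_ext : ∀ B D : BinTree, B.numLeaves = D.numLeaves →
    (∀ k < B.numLeaves, addr B k = addr D k) → B = D := by
  intro B
  induction B with
  | leaf => intro D hn _; exact (numLeaves_eq_one hn.symm).symm
  | node b1 b2 ih1 ih2 =>
    intro D hn h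
    have hb1 := numLeaves_pos b1
    have hb2 := numLeaves_pos b2
    cases D with
    | leaf =>
      exfalso
      simp [BinTree.numLeaves] at hn
      omega
    | node d1 d2 =>
      have hd1 := numLeaves_pos d1
      have hd2 := numLeaves_pos d2
      have hnn : b1.numLeaves + b2.numLeaves = d1.numLeaves + d2.numLeaves := by
        simpa [BinTree.numLeaves] using hn
      have hbd : b1.numLeaves = d1.numLeaves := by
        by_contra hne
        rcases Nat.lt_or_ge b1.numLeaves d1.numLeaves with hlt | hge
        · have := h b1.numLeaves (by simp [BinTree.numLeaves]; omega)
          rw [addr_node_right (le_refl _), addr_node_left hlt] at this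
          simp at this
        · have hlt : d1.numLeaves < b1.numLeaves := by omega
          have := h d1.numLeaves (by simp [BinTree.numLeaves]; omega)
          rw [addr_node_left hlt, addr_node_right (le_refl _)] at this
          simp at this
      refine congrArg₂ BinTree.node ?_ ?_
      · apply ih1 d1 hbd
        intro k hk
        have := h k (by simp [BinTree.numLeaves]; omega)
        rw [addr_node_left hk, addr_node_left (by omega)] at this
        simpa using this
      · apply ih2 d2 (by omega)
        intro k hk
        have := h (b1.numLeaves + k) (by simp [BinTree.numLeaves]; omega)
        rw [addr_node_right (l := b1) (r := b2) (k := b1.numLeaves + k) (by omega),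
          Nat.add_sub_cancel_left, hbd,
          addr_node_right (l := d1) (r := d2) (by omega), Nat.add_sub_cancel_left] at this
        simpa using this


/-- **Uniqueness of tree pair representatives**: if a reduced tree pair
diagram and another tree pair diagram with the same number of carets
represent the same element of `F`, then they coincide. -/
lemma toF_injective {A B P Q : BinTree} (hAB : IsReducedPair A B)
    (hPQ : P.numCarets = Q.numCarets) (hAP : A.numCarets = P.numCarets)
    (h : toF A B = toF P Q) : A = P ∧ B = Q := by
  have hABn : A.numLeaves = B.numLeaves := by
    rw [numLeaves_eq_numCarets_succ, numLeaves_eq_numCarets_succ, hAB.1]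
  have hPQn : P.numLeaves = Q.numLeaves := by
    rw [numLeaves_eq_numCarets_succ, numLeaves_eq_numCarets_succ, hPQ]
  have hAPn : A.numLeaves = P.numLeaves := by
    rw [numLeaves_eq_numCarets_succ, numLeaves_eq_numCarets_succ, hAP]
  have rigidAB : ∀ k < A.numLeaves, ∀ s,
      phi (toF A B) (app (addr A k) s) = app (addr B k) s :=
    fun k hk s => pair_rigid A B hABn k hk s
  have rigidPQ : ∀ j < P.numLeaves, ∀ s,
      phi (toF A B) (app (addr P j) s) = app (addr Q j) s := by
    intro j hj s
    rw [h]
    exact pair_rigid P Q hPQn j hj s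
  have href : Refines A P := by
    intro j hj
    obtain ⟨k, hk, u, hu⟩ := exists_addr_prefix A (app (addr P j) (fun _ => false))
    rcases app_comparable hu.symm with hc | hc
    · exact ⟨k, hk, hc⟩
    · by_cases heq : addr P j = addr A k
      · exact ⟨k, hk, by rw [heq]⟩
      · exfalso
        obtain ⟨m, hm, z, hwz, h0, h1⟩ := exposed_below A (addr P j) k hk hc heq
        obtain ⟨y, hy⟩ := hwz
        have key : ∀ (b : Bool) (hAm : addr A (if b then m + 1 else m) = z ++ [b]),
            addr B (if b then m + 1 else m) = addr Q j ++ (y ++ [b]) := by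
          intro b hAm
          apply app_left_cancel
          intro s
          have e1 := rigidAB (if b then m + 1 else m) (by split <;> omega) s
          rw [hAm, ← hy, List.append_assoc, app_append,
            rigidPQ j hj (app (y ++ [b]) s), ← app_append] at e1
          exact e1.symm
        have hBm : addr B m = addr Q j ++ (y ++ [false]) := by
          have := key false (by simpa using h0)
          simpa using this
        have hBm1 : addr B (m + 1) = addr Q j ++ (y ++ [true]) := by
          have := key true (by simpa using h1)
          simpa using this
        have hmemA : m ∈ exposedCaretPairs A :=
          (mem_exposedCaretPairs_iff A m).mpr ⟨hm, z, h0, h1⟩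
        have hmemB : m ∈ exposedCaretPairs B :=
          (mem_exposedCaretPairs_iff B m).mpr
            ⟨hABn ▸ hm, addr Q j ++ y,
              by rw [hBm, List.append_assoc],
              by rw [hBm1, List.append_assoc]⟩
        exact hAB.2 m ⟨hmemA, hmemB⟩
  have hAPt : A = P := refines_eq A P href hAPn
  subst hAPt
  refine ⟨rfl, ?_⟩
  apply addr_ext B Q (by omega)
  intro k hk
  apply app_left_cancel
  intro s
  have e1 := rigidAB k (by omega) s
  have e2 := rigidPQ k (by omega) s
  rw [← e1, e2]

lemma numCarets_rot (a b c : BinTree) :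
    (BinTree.node (BinTree.node a b) c).numCarets =
      (BinTree.node a (BinTree.node b c)).numCarets := by
  simp [BinTree.numCarets]
  omega

/-- **Semantic lemma**: under the hypotheses of Statement 1, the reduced tree
pair diagram of `w·α` is obtained from that of `w` by the appropriate rotation
of the negative tree. -/
lemma semantic_rotation (w : F) (m : ℕ) (Tm Tp Sm Sp : BinTree) (α : F)
    (hred : IsReducedPair Tm Tp) (hrepr : toF Tm Tp = w)
    (hTm : Tm.numCarets = m + 1)
    (hα : (α = x0 ∧ Tm.leftSubtree ≠ BinTree.leaf) ∨
          (α = x0⁻¹ ∧ Tm.rightSubtree ≠ BinTree.leaf) ∨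
          (α = x1 ∧ Tm.rightSubtree.leftSubtree ≠ BinTree.leaf) ∨
          (α = x1⁻¹ ∧ Tm.rightSubtree.rightSubtree ≠ BinTree.leaf))
    (hred' : IsReducedPair Sm Sp) (hrepr' : toF Sm Sp = w * α)
    (hSm : Sm.numCarets = m + 1) :
    Sp = Tp ∧
      ((∃ a b c, Tm = BinTree.node (BinTree.node a b) c ∧
          Sm = BinTree.node a (BinTree.node b c)) ∨
       (∃ a b c, Tm = BinTree.node a (BinTree.node b c) ∧
          Sm = BinTree.node (BinTree.node a b) c) ∨
       (∃ t a b c, Tm = BinTree.node t (BinTree.node (BinTree.node a b) c) ∧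
          Sm = BinTree.node t (BinTree.node a (BinTree.node b c))) ∨
       (∃ t a b c, Tm = BinTree.node t (BinTree.node a (BinTree.node b c)) ∧
          Sm = BinTree.node t (BinTree.node (BinTree.node a b) c))) := by
  subst hrepr
  rcases hα with ⟨rfl, hne⟩ | ⟨rfl, hne⟩ | ⟨rfl, hne⟩ | ⟨rfl, hne⟩
  · -- α = x0
    obtain ⟨a, b, c, rfl⟩ : ∃ a b c, Tm = BinTree.node (BinTree.node a b) c := by
      rcases Tm with _ | ⟨_ | ⟨a, b⟩, c⟩
      · exact absurd rfl hne
      · exact absurd rfl hne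
      · exact ⟨_, _, _, rfl⟩
    have heq : toF Sm Sp = toF (BinTree.node a (BinTree.node b c)) Tp := by
      rw [hrepr', toF_mul_x0]
    have hcount : (BinTree.node a (BinTree.node b c)).numCarets = Tp.numCarets := by
      rw [← numCarets_rot, hred.1]
    obtain ⟨h1, h2⟩ := toF_injective hred' hcount
      (by rw [hSm, ← hTm, numCarets_rot]) heq
    exact ⟨h2, Or.inl ⟨a, b, c, rfl, h1⟩⟩
  · -- α = x0⁻¹
    obtain ⟨a, b, c, rfl⟩ : ∃ a b c, Tm = BinTree.node a (BinTree.node b c) := by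
      rcases Tm with _ | ⟨a, _ | ⟨b, c⟩⟩
      · exact absurd rfl hne
      · exact absurd rfl hne
      · exact ⟨_, _, _, rfl⟩
    have heq : toF Sm Sp = toF (BinTree.node (BinTree.node a b) c) Tp := by
      rw [hrepr', toF_mul_x0_inv]
    have hcount : (BinTree.node (BinTree.node a b) c).numCarets = Tp.numCarets := by
      rw [numCarets_rot, hred.1]
    obtain ⟨h1, h2⟩ := toF_injective hred' hcount
      (by rw [hSm, ← hTm]; exact (numCarets_rot a b c).symm) heq
    exact ⟨h2, Or.inr (Or.inl ⟨a, b, c, rfl, h1⟩)⟩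
  · -- α = x1
    obtain ⟨t, a, b, c, rfl⟩ :
        ∃ t a b c, Tm = BinTree.node t (BinTree.node (BinTree.node a b) c) := by
      rcases Tm with _ | ⟨t, _ | ⟨_ | ⟨a, b⟩, c⟩⟩
      · exact absurd rfl hne
      · exact absurd rfl hne
      · exact absurd rfl hne
      · exact ⟨_, _, _, _, rfl⟩
    have heq : toF Sm Sp = toF (BinTree.node t (BinTree.node a (BinTree.node b c))) Tp := by
      rw [hrepr', toF_mul_x1]
    have hcount : (BinTree.node t (BinTree.node a (BinTree.node b c))).numCarets
        = Tp.numCarets := by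
      rw [← hred.1]
      simp [BinTree.numCarets]
      omega
    obtain ⟨h1, h2⟩ := toF_injective hred' hcount
      (by rw [hSm, ← hTm]; simp [BinTree.numCarets]; omega) heq
    exact ⟨h2, Or.inr (Or.inr (Or.inl ⟨t, a, b, c, rfl, h1⟩))⟩
  · -- α = x1⁻¹
    obtain ⟨t, a, b, c, rfl⟩ :
        ∃ t a b c, Tm = BinTree.node t (BinTree.node a (BinTree.node b c)) := by
      rcases Tm with _ | ⟨t, _ | ⟨a, _ | ⟨b, c⟩⟩⟩
      · exact absurd rfl hne
      · exact absurd rfl hne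
      · exact absurd rfl hne
      · exact ⟨_, _, _, _, rfl⟩
    have heq : toF Sm Sp = toF (BinTree.node t (BinTree.node (BinTree.node a b) c)) Tp := by
      rw [hrepr', toF_mul_x1_inv]
    have hcount : (BinTree.node t (BinTree.node (BinTree.node a b) c)).numCarets
        = Tp.numCarets := by
      rw [← hred.1]
      simp [BinTree.numCarets]
      omega
    obtain ⟨h1, h2⟩ := toF_injective hred' hcount
      (by rw [hSm, ← hTm]; simp [BinTree.numCarets]; omega) heq
    exact ⟨h2, Or.inr (Or.inr (Or.inr ⟨t, a, b, c, rfl, h1⟩))⟩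

end Statement1Aux


/-- Fordham, Lemma 2.3.1. Under the condition corresponding
to the generator `α`, if the reduced tree pair diagram of `w·α` also has `m+1`
carets, then exactly one pair of caret types changes. -/
theorem exactly_one_caret_pair_changes (w : F) (m : ℕ) (Tm Tp Sm Sp : BinTree) (α : F)
    (hred : IsReducedPair Tm Tp) (hrepr : toF Tm Tp = w)
    (hTm : Tm.numCarets = m + 1)
    (hα : (α = x0 ∧ Tm.leftSubtree ≠ BinTree.leaf) ∨
          (α = x0⁻¹ ∧ Tm.rightSubtree ≠ BinTree.leaf) ∨
          (α = x1 ∧ Tm.rightSubtree.leftSubtree ≠ BinTree.leaf) ∨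
          (α = x1⁻¹ ∧ Tm.rightSubtree.rightSubtree ≠ BinTree.leaf))
    (hred' : IsReducedPair Sm Sp) (hrepr' : toF Sm Sp = w * α)
    (hSm : Sm.numCarets = m + 1) :
    ∃! i : ℕ, i ≤ m ∧
      (caretTypeAt Sm i, caretTypeAt Sp i) ≠ (caretTypeAt Tm i, caretTypeAt Tp i) := by
  obtain ⟨hSp, hcase⟩ :=
    semantic_rotation w m Tm Tp Sm Sp α hred hrepr hTm hα hred' hrepr' hSm
  subst hSp
  rcases hcase with ⟨a, b, c, rfl, rfl⟩ | ⟨a, b, c, rfl, rfl⟩ |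
    ⟨t, a, b, c, rfl, rfl⟩ | ⟨t, a, b, c, rfl, rfl⟩
  · exact exists_unique_change m _ _ Sp
      (leftInfo a ++ (CaretPos.left, decide (b ≠ BinTree.leaf)) :: interiorInfo b)
      (leftInfo a ++ (CaretPos.left, decide (BinTree.node b c ≠ BinTree.leaf)) :: interiorInfo b)
      (rightInfo c)
      (CaretPos.left, decide (c ≠ BinTree.leaf))
      (CaretPos.right, decide (c ≠ BinTree.leaf))
      (by simp only [infoList, leftInfo, List.cons_append, List.append_assoc])
      (by simp only [infoList, rightInfo, List.cons_append, List.append_assoc])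
      hTm
      (forall₂_append (infoRel_refl _)
        (List.Forall₂.cons ⟨rfl, fun h => nomatch h⟩ (infoRel_refl _)))
      (P_no_right a b _)
      (by simp only [List.length_append, List.length_cons]; omega)
      (Or.inl ⟨by simp, rfl⟩)
  · exact exists_unique_change m _ _ Sp
      (leftInfo a ++ (CaretPos.left, decide (BinTree.node b c ≠ BinTree.leaf)) :: interiorInfo b)
      (leftInfo a ++ (CaretPos.left, decide (b ≠ BinTree.leaf)) :: interiorInfo b)
      (rightInfo c)
      (CaretPos.right, decide (c ≠ BinTree.leaf))
      (CaretPos.left, decide (c ≠ BinTree.leaf))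
      (by simp only [infoList, rightInfo, List.cons_append, List.append_assoc])
      (by simp only [infoList, leftInfo, List.cons_append, List.append_assoc])
      hTm
      (forall₂_append (infoRel_refl _)
        (List.Forall₂.cons ⟨rfl, fun h => nomatch h⟩ (infoRel_refl _)))
      (P_no_right a b _)
      (by simp only [List.length_append, List.length_cons]; omega)
      (Or.inr ⟨rfl, by simp⟩)
  · exact exists_unique_change m _ _ Sp
      (leftInfo t ++ (CaretPos.left,
        decide (BinTree.node (BinTree.node a b) c ≠ BinTree.leaf)) :: interiorInfo a)
      (leftInfo t ++ (CaretPos.left,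
        decide (BinTree.node a (BinTree.node b c) ≠ BinTree.leaf)) :: interiorInfo a)
      (interiorInfo b ++ (CaretPos.right, decide (c ≠ BinTree.leaf)) :: rightInfo c)
      (CaretPos.interior, decide (b ≠ BinTree.leaf))
      (CaretPos.right, decide (BinTree.node b c ≠ BinTree.leaf))
      (by simp only [infoList, rightInfo, interiorInfo, List.cons_append, List.append_assoc])
      (by simp only [infoList, rightInfo, List.cons_append, List.append_assoc])
      hTm
      (forall₂_append (infoRel_refl _)
        (List.Forall₂.cons ⟨rfl, fun h => nomatch h⟩ (infoRel_refl _)))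
      (P_no_right t a _)
      (by simp only [List.length_append, List.length_cons]; omega)
      (Or.inl ⟨by simp, rfl⟩)
  · exact exists_unique_change m _ _ Sp
      (leftInfo t ++ (CaretPos.left,
        decide (BinTree.node a (BinTree.node b c) ≠ BinTree.leaf)) :: interiorInfo a)
      (leftInfo t ++ (CaretPos.left,
        decide (BinTree.node (BinTree.node a b) c ≠ BinTree.leaf)) :: interiorInfo a)
      (interiorInfo b ++ (CaretPos.right, decide (c ≠ BinTree.leaf)) :: rightInfo c)
      (CaretPos.right, decide (BinTree.node b c ≠ BinTree.leaf))
      (CaretPos.interior, decide (b ≠ BinTree.leaf))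
      (by simp only [infoList, rightInfo, List.cons_append, List.append_assoc])
      (by simp only [infoList, rightInfo, interiorInfo, List.cons_append, List.append_assoc])
      hTm
      (forall₂_append (infoRel_refl _)
        (List.Forall₂.cons ⟨rfl, fun h => nomatch h⟩ (infoRel_refl _)))
      (P_no_right t a _)
      (by simp only [List.length_append, List.length_cons]; omega)
      (Or.inr ⟨rfl, by simp⟩)

end Thompson
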